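/- The polynomial x^4 - 3x^2 + 18, regarded as a polynomial over the field ℚ_3 of 3-adic numbers, is irreducible, and its Galois group over ℚ_3 is cyclic of order 4. -/

import Mathlib

open Polynomial

lemma padic3_int_not_sq {u : ℤ} (hu : ((u : ZMod 3) = 2)) :
    ¬ IsSquare ((u : ℤ) : ℚ_[3]) := by
  rintro ⟨x, hx⟩
  have hu1 : ‖((u : ℤ) : ℚ_[3])‖ ≤ 1 := Padic.norm_int_le_one u
  have hxx : ‖x‖ * ‖x‖ ≤ 1 := by rw [← norm_mul, ← hx]; exact hu1
  have hnx : ‖x‖ ≤ 1 := by nlinarith [norm_nonneg x]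
  set z : ℤ_[3] := ⟨x, hnx⟩ with hz
  have hzz : z * z = ((u : ℤ) : ℤ_[3]) := by
    apply Subtype.coe_injective
    push_cast
    rw [← hx]
  have h2 : PadicInt.toZMod z * PadicInt.toZMod z = 2 := by
    rw [← map_mul, hzz, map_intCast, hu]
  revert h2
  generalize PadicInt.toZMod z = y
  revert y
  decide

lemma not_sq_neg7 : ¬ IsSquare ((-7 : ℤ) : ℚ_[3]) := by
  apply padic3_int_not_sq; decide

lemma not_sq_two : ¬ IsSquare ((2 : ℤ) : ℚ_[3]) := by
  apply padic3_int_not_sq; decide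

lemma sq_neg14 : ∃ s : ℚ_[3], s ^ 2 = -14 := by
  obtain ⟨z, hz, -⟩ := @hensels_lemma 3 _ ℤ_[3] _ _ (X ^ 2 + 14) 2 (by
    have h18 : ‖((X ^ 2 + 14 : ℤ_[3][X]).eval 2)‖ < 1 := by
      have : ((X ^ 2 + 14 : ℤ_[3][X]).eval 2) = ((18 : ℤ) : ℤ_[3]) := by
        simp; norm_num
      rw [this, PadicInt.norm_int_lt_one_iff_dvd]
      norm_num
    have h4 : ‖((X ^ 2 + 14 : ℤ_[3][X]).derivative.eval 2)‖ = 1 := by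
      have : ((X ^ 2 + 14 : ℤ_[3][X]).derivative.eval 2) = ((4 : ℤ) : ℤ_[3]) := by
        simp [derivative_X_pow]; norm_num
      rw [this]
      have hle : ‖((4 : ℤ) : ℤ_[3])‖ ≤ 1 := PadicInt.norm_le_one _
      have hlt : ¬ ‖((4 : ℤ) : ℤ_[3])‖ < 1 := by
        rw [PadicInt.norm_int_lt_one_iff_dvd]; norm_num
      linarith [lt_or_eq_of_le hle |>.resolve_left hlt]
    rw [coe_aeval_eq_eval, h4]; simpa using h18)
  refine ⟨(z : ℚ_[3]), ?_⟩
  have : (z : ℚ_[3]) ^ 2 + 14 = 0 := by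
    rw [coe_aeval_eq_eval] at hz
    have := congrArg (fun t : ℤ_[3] => (t : ℚ_[3])) hz
    push_cast at this
    have h14 : ((14 : ℤ_[3]) : ℚ_[3]) = 14 := PadicInt.coe_natCast 14
    simpa [h14] using this
  linear_combination this


lemma monic_quad_shape {F : Type*} [Field F] {p : F[X]} (hm : p.Monic) (hd : p.natDegree = 2) :
    ∃ a b, p = X ^ 2 + C a * X + C b := by
  have h : (p - X ^ 2).natDegree ≤ 1 := by
    rw [natDegree_le_iff_coeff_eq_zero]
    intro N hN
    rw [coeff_sub, coeff_X_pow]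
    rcases eq_or_lt_of_le (Nat.succ_le_of_lt hN) with h2 | h3
    · rw [if_pos h2.symm, ← h2]
      have := hm.coeff_natDegree
      rw [hd] at this
      rw [this, sub_self]
    · rw [if_neg (by omega), coeff_eq_zero_of_natDegree_lt (by omega), sub_zero]
  obtain ⟨a, b, hab⟩ := exists_eq_X_add_C_of_natDegree_le_one h
  exact ⟨a, b, by linear_combination hab⟩

lemma no_root (r : ℚ_[3]) (hr : r ^ 4 - 3 * r ^ 2 + 18 = 0) : False := by
  apply not_sq_neg7
  refine ⟨(2 * r ^ 2 - 3) / 3, ?_⟩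
  push_cast
  field_simp
  ring_nf
  linear_combination (-4 : ℚ_[3]) * hr

lemma quad_case (a b c d : ℚ_[3])
    (H : (X ^ 4 - 3 * X ^ 2 + 18 : ℚ_[3][X]) =
      (X ^ 2 + C a * X + C b) * (X ^ 2 + C c * X + C d)) : False := by
  have c3 : (C (3 : ℚ_[3]) : ℚ_[3][X]) = 3 := map_ofNat C 3
  have c18 : (C (18 : ℚ_[3]) : ℚ_[3][X]) = 18 := map_ofNat C 18
  have H' : (X ^ 4 - C 3 * X ^ 2 + C 18 : ℚ_[3][X]) =
      X ^ 4 + C (a + c) * X ^ 3 + C (b + d + a * c) * X ^ 2 + C (a * d + b * c) * X + C (b * d) := by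
    rw [c3, c18, H]
    simp only [C_add, C_mul]
    ring
  have e3 := congrArg (fun q => coeff q 3) H'
  have e2 := congrArg (fun q => coeff q 2) H'
  have e1 := congrArg (fun q => coeff q 1) H'
  have e0 := congrArg (fun q => coeff q 0) H'
  simp only [coeff_add, coeff_sub, coeff_C_mul, coeff_X_pow, coeff_C, coeff_X] at e3 e2 e1 e0
  norm_num at e3 e2 e1 e0
  have key : a * (d - b) = 0 := by linear_combination -e1 + b * e3
  rcases mul_eq_zero.mp key with ha | hdb
  · have hd : d = -3 - b := by linear_combination -e2 - c * ha
    subst hd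
    apply not_sq_neg7
    refine ⟨(2 * b + 3) / 3, ?_⟩
    push_cast
    field_simp
    linear_combination (-4 : ℚ_[3]) * e0
  · apply not_sq_two
    refine ⟨b / 3, ?_⟩
    push_cast
    field_simp
    linear_combination e0 + b * hdb

lemma f_natDegree : (X ^ 4 - 3 * X ^ 2 + 18 : ℚ_[3][X]).natDegree = 4 := by
  compute_degree!

lemma fC : (X ^ 4 - 3 * X ^ 2 + 18 : ℚ_[3][X]) = X ^ 4 - C 3 * X ^ 2 + C 18 := by
  rw [map_ofNat C 3, map_ofNat C 18]

lemma f_monic : (X ^ 4 - 3 * X ^ 2 + 18 : ℚ_[3][X]).Monic := by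
  unfold Monic leadingCoeff
  rw [f_natDegree, fC]
  simp [coeff_X_pow, coeff_C]

lemma f_irred : Irreducible (X ^ 4 - 3 * X ^ 2 + 18 : ℚ_[3][X]) := by
  have hmon := f_monic
  have hne : (X ^ 4 - 3 * X ^ 2 + 18 : ℚ_[3][X]) ≠ 0 := hmon.ne_zero
  rw [irreducible_iff]
  constructor
  · intro hu
    have := natDegree_eq_zero_of_isUnit hu
    rw [f_natDegree] at this
    omega
  rintro g h hgh
  by_contra hcon
  push_neg at hcon
  obtain ⟨hg, hh⟩ := hcon
  have hg0 : g ≠ 0 := fun h0 => hne (by rw [hgh, h0, zero_mul])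
  have hh0 : h ≠ 0 := fun h0 => hne (by rw [hgh, h0, mul_zero])
  have hdeg : g.natDegree + h.natDegree = 4 := by
    rw [← natDegree_mul hg0 hh0, ← hgh, f_natDegree]
  have degpos : ∀ p : ℚ_[3][X], p ≠ 0 → ¬ IsUnit p → 1 ≤ p.natDegree := by
    intro p hp0 hpu
    by_contra h1
    push_neg at h1
    have h0 : p.natDegree = 0 := by omega
    have hpC : p = C (p.coeff 0) := eq_C_of_natDegree_eq_zero h0
    have hc : p.coeff 0 ≠ 0 := fun hc => hp0 (by rw [hpC, hc, map_zero])
    exact hpu (hpC ▸ isUnit_C.mpr (isUnit_iff_ne_zero.mpr hc))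
  have hg1 := degpos g hg0 hg
  have hh1 := degpos h hh0 hh
  -- normalize to monic
  set u := g.leadingCoeff with hu
  have hu0 : u ≠ 0 := leadingCoeff_ne_zero.mpr hg0
  set G := C u⁻¹ * g with hG
  set Hp := C u * h with hHp
  have hGH : (X ^ 4 - 3 * X ^ 2 + 18 : ℚ_[3][X]) = G * Hp := by
    rw [hG, hHp, hgh]
    rw [mul_mul_mul_comm, ← C_mul, inv_mul_cancel₀ hu0, C_1, one_mul]
  have hGmon : G.Monic := by
    rw [Monic, hG, leadingCoeff_mul, leadingCoeff_C]
    exact inv_mul_cancel₀ hu0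
  have hHmon : Hp.Monic := by
    have := hmon
    rw [hGH, Monic, leadingCoeff_mul, hGmon.leadingCoeff, one_mul] at this
    exact this
  have hGdeg : G.natDegree = g.natDegree := by
    rw [hG, natDegree_C_mul (inv_ne_zero hu0)]
  have hHdeg : Hp.natDegree = h.natDegree := by
    rw [hHp, natDegree_C_mul hu0]
  have hcases : G.natDegree = 1 ∨ G.natDegree = 2 ∨ Hp.natDegree = 1 := by omega
  have root_of_linear : ∀ p q : ℚ_[3][X], p.Monic → p.natDegree = 1 →
      (X ^ 4 - 3 * X ^ 2 + 18 : ℚ_[3][X]) = p * q → False := by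
    intro p q hpm hpd hpq
    have hp : p = X + C (p.coeff 0) := hpm.eq_X_add_C hpd
    rw [hp] at hpq
    apply no_root (-(p.coeff 0))
    have hev := congrArg (fun t => eval (-(p.coeff 0)) t) hpq
    simp only [eval_mul, eval_add, eval_pow, eval_sub, eval_ofNat, eval_X, eval_C,
      neg_add_cancel, zero_mul] at hev
    linear_combination hev
  rcases hcases with h1 | h2 | h3
  · exact root_of_linear G Hp hGmon h1 hGH
  · have hH2 : Hp.natDegree = 2 := by omega
    obtain ⟨a, b, hab⟩ := monic_quad_shape hGmon h2
    obtain ⟨c, d, hcd⟩ := monic_quad_shape hHmon hH2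
    exact quad_case a b c d (by rw [hGH, hab, hcd])
  · exact root_of_linear Hp G hHmon h3 (by rw [hGH, mul_comm])


noncomputable section

local notation "fpoly" => (X ^ 4 - 3 * X ^ 2 + 18 : ℚ_[3][X])

set_option maxHeartbeats 1000000 in
theorem main : IsCyclic (fpoly).Gal ∧ Nat.card (fpoly).Gal = 4 := by
  haveI hfact : Fact (Irreducible fpoly) := ⟨f_irred⟩
  obtain ⟨α, hα0⟩ : ∃ x : AdjoinRoot fpoly, x = AdjoinRoot.root fpoly := ⟨_, rfl⟩
  have hrel : α ^ 4 - 3 * α ^ 2 + 18 = 0 := by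
    have h := AdjoinRoot.mk_self (f := fpoly)
    simp only [map_add, map_sub, map_pow, map_mul, map_ofNat, AdjoinRoot.mk_X] at h
    rw [← hα0] at h
    exact h
  haveI : CharZero (AdjoinRoot fpoly) :=
    charZero_of_injective_algebraMap (algebraMap ℚ_[3] (AdjoinRoot fpoly)).injective
  haveI : FiniteDimensional ℚ_[3] (AdjoinRoot fpoly) :=
    Module.Finite.of_basis (AdjoinRoot.powerBasis (f := fpoly) f_irred.ne_zero).basis
  have hrank : Module.finrank ℚ_[3] (AdjoinRoot fpoly) = 4 := by
    rw [(AdjoinRoot.powerBasis (f := fpoly) f_irred.ne_zero).finrank]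
    exact f_natDegree
  have hα_ne : α ≠ 0 := by
    intro h
    rw [h] at hrel
    norm_num at hrel
  obtain ⟨s0, hs0⟩ := sq_neg14
  obtain ⟨s, hs⟩ : ∃ x : AdjoinRoot fpoly, x = algebraMap ℚ_[3] (AdjoinRoot fpoly) s0 := ⟨_, rfl⟩
  have hs2 : s ^ 2 = -14 := by rw [hs, ← map_pow, hs0, map_neg, map_ofNat]
  have hs_ne : s ≠ 0 := by
    intro h
    rw [h] at hs2
    norm_num at hs2
  obtain ⟨β, hβ⟩ : ∃ x : AdjoinRoot fpoly, x = s * (3 - 2 * α ^ 2) / (7 * α) := ⟨_, rfl⟩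
  have h7 : (7 : AdjoinRoot fpoly) ≠ 0 := by norm_num
  have hβsq : β ^ 2 = 3 - α ^ 2 := by
    rw [hβ]
    field_simp
    linear_combination (-7 : AdjoinRoot fpoly) * hrel + (4 * α ^ 4 - 12 * α ^ 2 + 9) * hs2
  have hβ_ne : β ≠ 0 := by
    intro h
    rw [h] at hβsq
    have h3 : α ^ 2 = 3 := by linear_combination hβsq
    rw [show α ^ 4 = (α ^ 2) ^ 2 by ring, h3] at hrel
    norm_num at hrel
  have hβrel : β ^ 4 - 3 * β ^ 2 + 18 = 0 := by
    rw [show β ^ 4 = (β ^ 2) ^ 2 by ring, hβsq]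
    linear_combination hrel
  have hsum : α ^ 2 + β ^ 2 = 3 := by rw [hβsq]; ring
  have hprod : α ^ 2 * β ^ 2 = 18 := by
    rw [hβsq]
    linear_combination -hrel
  have hmap : (fpoly).map (algebraMap ℚ_[3] (AdjoinRoot fpoly)) =
      (X ^ 4 - 3 * X ^ 2 + 18 : (AdjoinRoot fpoly)[X]) := by
    simp [Polynomial.map_ofNat]
  have hfactor : (X ^ 4 - 3 * X ^ 2 + 18 : (AdjoinRoot fpoly)[X]) =
      (X - C α) * (X - C (-α)) * ((X - C β) * (X - C (-β))) := by
    have expand : (X - C α) * (X - C (-α)) * ((X - C β) * (X - C (-β))) =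
        X ^ 4 - C (α ^ 2 + β ^ 2) * X ^ 2 + C (α ^ 2 * β ^ 2) := by
      simp only [C_add, C_mul, C_neg, C_pow]
      ring
    rw [expand, hsum, hprod, map_ofNat, map_ofNat]
  have hsplit : ((fpoly).map (algebraMap ℚ_[3] (AdjoinRoot fpoly))).Splits := by
    rw [splits_iff_exists_multiset]
    refine ⟨{α, -α, β, -β}, ?_⟩
    rw [(f_monic.map (algebraMap ℚ_[3] (AdjoinRoot fpoly))).leadingCoeff, hmap, C_1, one_mul]
    simp only [Multiset.insert_eq_cons, Multiset.map_cons, Multiset.map_singleton,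
      Multiset.prod_cons, Multiset.prod_singleton]
    linear_combination hfactor
  haveI hsf : Polynomial.IsSplittingField ℚ_[3] (AdjoinRoot fpoly) fpoly := by
    constructor
    · exact hsplit
    · rw [eq_top_iff, ← AdjoinRoot.adjoinRoot_eq_top (f := fpoly)]
      apply Algebra.adjoin_mono
      intro x hx
      rw [Set.mem_singleton_iff] at hx
      subst hx
      rw [Polynomial.mem_rootSet]
      exact ⟨f_irred.ne_zero, by rw [AdjoinRoot.aeval_eq, AdjoinRoot.mk_self]⟩
  haveI : IsGalois ℚ_[3] (AdjoinRoot fpoly) :=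
    IsGalois.of_separable_splitting_field f_irred.separable
  have hβaeval : aeval β fpoly = 0 := by
    simp only [map_add, map_sub, map_pow, map_mul, map_ofNat, aeval_X]
    linear_combination hβrel
  obtain ⟨φ, hφ⟩ : ∃ x : AdjoinRoot fpoly →ₐ[ℚ_[3]] AdjoinRoot fpoly,
      x = AdjoinRoot.liftAlgHom fpoly (Algebra.ofId _ _) β hβaeval := ⟨_, rfl⟩
  have hφbij : Function.Bijective φ := by
    have hinj : Function.Injective φ := φ.toRingHom.injective
    have hinj' : Function.Injective φ.toLinearMap := hinj
    have hsurj : Function.Surjective φ.toLinearMap :=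
      (LinearMap.injective_iff_surjective).mp hinj'
    exact ⟨hinj, hsurj⟩
  obtain ⟨σ, hσ⟩ : ∃ x : AdjoinRoot fpoly ≃ₐ[ℚ_[3]] AdjoinRoot fpoly,
      x = AlgEquiv.ofBijective φ hφbij := ⟨_, rfl⟩
  have hσcoe : ∀ y, σ y = φ y := by intro y; rw [hσ]; rfl
  have hσα : σ α = β := by
    rw [hσcoe α, hφ, hα0]
    exact AdjoinRoot.liftAlgHom_root _ _ _ _
  have hσs : σ s = s := by
    rw [hs, hσcoe _]
    exact φ.commutes s0
  have hσβ : σ β = -α := by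
    have hmapdiv : σ (s * (3 - 2 * α ^ 2) / (7 * α)) =
        σ s * (3 - 2 * (σ α) ^ 2) / (7 * σ α) := by
      rw [map_div₀]
      simp only [map_mul, map_sub, map_pow, map_ofNat]
    rw [hβ, hmapdiv, hσs, hσα]
    rw [div_eq_iff (by
      intro h
      rcases mul_eq_zero.mp h with h | h
      · exact h7 h
      · exact hβ_ne h)]
    have h32 : 3 - 2 * β ^ 2 = 2 * α ^ 2 - 3 := by rw [hβsq]; ring
    rw [h32, hβ]
    field_simp
    ring
  have hσ2ne : σ * σ ≠ 1 := by
    intro h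
    have h2 := congrArg (fun t => t α) (h : σ * σ = 1)
    simp only [AlgEquiv.mul_apply, AlgEquiv.one_apply] at h2
    rw [hσα, hσβ] at h2
    have h3 : (2 : AdjoinRoot fpoly) * α = 0 := by linear_combination -h2
    rcases mul_eq_zero.mp h3 with h4 | h4
    · norm_num at h4
    · exact hα_ne h4
  have hcard : Fintype.card (AdjoinRoot fpoly ≃ₐ[ℚ_[3]] AdjoinRoot fpoly) = 4 := by
    rw [← Nat.card_eq_fintype_card, IsGalois.card_aut_eq_finrank, hrank]
  have hord : orderOf σ = 4 := by
    have hdvd : orderOf σ ∣ Fintype.card (AdjoinRoot fpoly ≃ₐ[ℚ_[3]] AdjoinRoot fpoly) :=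
      orderOf_dvd_card
    rw [hcard] at hdvd
    have hmem : orderOf σ ∈ Nat.divisors 4 := Nat.mem_divisors.mpr ⟨hdvd, by norm_num⟩
    have hdiv : Nat.divisors 4 = {1, 2, 4} := by decide
    rw [hdiv] at hmem
    simp only [Finset.mem_insert, Finset.mem_singleton] at hmem
    rcases hmem with h | h | h
    · have h1 := orderOf_eq_one_iff.mp h
      exact absurd (by rw [h1, mul_one]) hσ2ne
    · apply absurd _ hσ2ne
      rw [← pow_two]
      have h2 := pow_orderOf_eq_one σ
      rwa [h] at h2
    · exact h
  have hKcyc : IsCyclic (AdjoinRoot fpoly ≃ₐ[ℚ_[3]] AdjoinRoot fpoly) :=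
    isCyclic_of_orderOf_eq_card σ (by
      rw [hord]
      simp only [Nat.card_eq_fintype_card]
      exact hcard.symm)
  let e : AdjoinRoot fpoly ≃ₐ[ℚ_[3]] (fpoly).SplittingField :=
    Polynomial.IsSplittingField.algEquiv (AdjoinRoot fpoly) fpoly
  let ψ : (AdjoinRoot fpoly ≃ₐ[ℚ_[3]] AdjoinRoot fpoly) ≃* (fpoly).Gal := AlgEquiv.autCongr e
  constructor
  · exact isCyclic_of_surjective ψ ψ.surjective
  · have hc2 : Nat.card (AdjoinRoot fpoly ≃ₐ[ℚ_[3]] AdjoinRoot fpoly) = 4 := by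
      simp only [Nat.card_eq_fintype_card]
      exact hcard
    exact (Nat.card_congr ψ.toEquiv.symm).trans hc2

/-- The polynomial `x^4 - 3x^2 + 18` is irreducible over `ℚ_3`, and its Galois group over
`ℚ_3` is cyclic of order 4. -/
theorem quartic_over_Q3_irreducible_and_gal_C4 :
    Irreducible (X ^ 4 - 3 * X ^ 2 + 18 : ℚ_[3][X]) ∧
      IsCyclic (X ^ 4 - 3 * X ^ 2 + 18 : ℚ_[3][X]).Gal ∧
      Nat.card (X ^ 4 - 3 * X ^ 2 + 18 : ℚ_[3][X]).Gal = 4 := by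
  exact ⟨f_irred, main.1, main.2⟩

end
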